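/- In the AI regulation game with quadratic costs under regulation threshold θD ≥ 0, assume C1 is invertible. Let γ0 = (α0, β0) ∈ ℝ², set κ := max(β0, θD), and let γ1* = (α1*, β1*) maximize γ1 ↦ U_D(γ0, γ1) over the feasible set F(γ0, θD) = {(α, β) ∈ ℝ² : α ≥ α0 and β ≥ κ}. Then γ1* belongs to the four-element candidate set { γ0 + ((1−δ)/2)·C1⁻¹·r, (α0, β0 + (1−δ)·rβ/(2·c1bb)), (α0 + (1−δ)·rα/(2·c1aa) − (c1ab/c1aa)·max(0, θD − β0), κ), (α0, κ) }. -/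

import Mathlib

open Matrix

/-- The domain specialist's utility
`U_D(γ0, γ1) = (1−δ)·(rα·α1 + rβ·β1) − (γ1−γ0)ᵀ C1 (γ1−γ0)`. -/
noncomputable def UD (c1aa c1ab c1bb rα rβ δ : ℝ) (γ0 γ1 : Fin 2 → ℝ) : ℝ :=
  (1 - δ) * (rα * γ1 0 + rβ * γ1 1)
    - (γ1 - γ0) ⬝ᵥ ((!![c1aa, c1ab; c1ab, c1bb] : Matrix (Fin 2) (Fin 2) ℝ) *ᵥ (γ1 - γ0))

/-- Under regulation threshold `θD ≥ 0`, any maximizer of the specialist's utility over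
the regulated feasible set `{(α, β) : α ≥ α0, β ≥ max(β0, θD)}` belongs to the
four-element candidate set. -/
lemma UD_eq (c1aa c1ab c1bb rα rβ δ : ℝ) (γ0 γ1 : Fin 2 → ℝ) :
    UD c1aa c1ab c1bb rα rβ δ γ0 γ1 =
      (1 - δ) * (rα * γ1 0 + rβ * γ1 1)
        - (c1aa * (γ1 0 - γ0 0) ^ 2 + 2 * c1ab * (γ1 0 - γ0 0) * (γ1 1 - γ0 1)
            + c1bb * (γ1 1 - γ0 1) ^ 2) := by
  simp [UD, Matrix.mulVec, dotProduct, Fin.sum_univ_two]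
  ring

lemma quad_key (b q κ s : ℝ) (hb : 0 < b) (hs : κ ≤ s)
    (h : ∀ t, κ ≤ t → q * t - b * t ^ 2 ≤ q * s - b * s ^ 2) :
    s = κ ∨ q = 2 * b * s := by
  rcases eq_or_lt_of_le hs with h0 | h0
  · exact Or.inl h0.symm
  right
  by_contra hq
  rcases lt_or_gt_of_ne hq with hlt | hgt
  · set e1 : ℝ := (2 * b * s - q) / (2 * b) with he1def
    have hb2 : (0:ℝ) < 2 * b := by linarith
    have he1 : 0 < e1 := div_pos (by linarith) hb2
    have he1' : (2 * b) * e1 = 2 * b * s - q := mul_div_cancel₀ _ (ne_of_gt hb2)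
    set ε : ℝ := min (s - κ) e1 with hεdef
    have hε : 0 < ε := lt_min (by linarith) he1
    have hεe : ε ≤ e1 := min_le_right _ _
    have hεκ : κ ≤ s - ε := by
      have := min_le_left (s - κ) e1
      simp only [hεdef]; linarith
    have hh := h (s - ε) hεκ
    nlinarith [mul_pos hε (show 0 < 2 * b * s - q - b * ε by nlinarith)]
  · set ε : ℝ := (q - 2 * b * s) / (2 * b) with hεdef
    have hb2 : (0:ℝ) < 2 * b := by linarith
    have hε : 0 < ε := div_pos (by linarith) hb2
    have hε' : (2 * b) * ε = q - 2 * b * s := mul_div_cancel₀ _ (ne_of_gt hb2)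
    have hh := h (s + ε) (by linarith)
    nlinarith [mul_pos hε (show 0 < q - 2 * b * s - b * ε by nlinarith)]

theorem specialist_best_response_candidates_regulated
    (c0aa c0bb c0ab c1aa c1bb c1ab rα rβ δ θD : ℝ)
    (hc0aa : 0 < c0aa) (hc0bb : 0 < c0bb) (hc1aa : 0 < c1aa) (hc1bb : 0 < c1bb)
    (hrα : 0 < rα) (hrβ : 0 < rβ) (hδ0 : 0 < δ) (hδ1 : δ < 1) (hθD : 0 ≤ θD)
    (hC1inv : IsUnit (!![c1aa, c1ab; c1ab, c1bb] : Matrix (Fin 2) (Fin 2) ℝ).det)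
    (γ0 γ1s : Fin 2 → ℝ)
    (hfeas : γ0 0 ≤ γ1s 0 ∧ max (γ0 1) θD ≤ γ1s 1)
    (hmax : ∀ γ1 : Fin 2 → ℝ, γ0 0 ≤ γ1 0 → max (γ0 1) θD ≤ γ1 1 →
      UD c1aa c1ab c1bb rα rβ δ γ0 γ1 ≤ UD c1aa c1ab c1bb rα rβ δ γ0 γ1s) :
    γ1s = γ0 + ((1 - δ) / 2) •
        ((!![c1aa, c1ab; c1ab, c1bb] : Matrix (Fin 2) (Fin 2) ℝ)⁻¹ *ᵥ ![rα, rβ]) ∨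
    γ1s = ![γ0 0, γ0 1 + (1 - δ) * rβ / (2 * c1bb)] ∨
    γ1s = ![γ0 0 + (1 - δ) * rα / (2 * c1aa) - (c1ab / c1aa) * max 0 (θD - γ0 1),
            max (γ0 1) θD] ∨
    γ1s = ![γ0 0, max (γ0 1) θD] := by
  have hκβ : max (γ0 1) θD ≤ γ1s 1 := hfeas.2
  have hα : γ1s 0 = γ0 0 ∨
      (1 - δ) * rα + 2 * c1aa * γ0 0 - 2 * c1ab * (γ1s 1 - γ0 1)
        = 2 * c1aa * γ1s 0 := by
    apply quad_key c1aa _ (γ0 0) (γ1s 0) hc1aa hfeas.1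
    intro t ht
    have h := hmax ![t, γ1s 1] (by simpa using ht) (by simpa using hκβ)
    rw [UD_eq, UD_eq] at h
    simp only [Matrix.cons_val_zero, Matrix.cons_val_one, Matrix.head_cons] at h
    linarith [h]
  have hβ : γ1s 1 = max (γ0 1) θD ∨
      (1 - δ) * rβ + 2 * c1bb * γ0 1 - 2 * c1ab * (γ1s 0 - γ0 0)
        = 2 * c1bb * γ1s 1 := by
    apply quad_key c1bb _ (max (γ0 1) θD) (γ1s 1) hc1bb hκβ
    intro t ht
    have h := hmax ![γ1s 0, t] (by simpa using hfeas.1) (by simpa using ht)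
    rw [UD_eq, UD_eq] at h
    simp only [Matrix.cons_val_zero, Matrix.cons_val_one, Matrix.head_cons] at h
    linarith [h]
  rcases hα with hα | hα <;> rcases hβ with hβ | hβ
  · right; right; right
    funext i; fin_cases i <;> simp [hα, hβ]
  · right; left
    rw [hα] at hβ
    funext i; fin_cases i <;> simp [hα]
    field_simp
    linarith
  · right; right; left
    rw [hβ] at hα
    have hmaxsub : max (γ0 1) θD - γ0 1 = max 0 (θD - γ0 1) := by
      rw [← max_sub_sub_right]; simp
    rw [hmaxsub] at hα
    funext i; fin_cases i <;> simp [hβ]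
    field_simp
    linear_combination (-1) * hα
  · left
    set C : Matrix (Fin 2) (Fin 2) ℝ := !![c1aa, c1ab; c1ab, c1bb] with hC
    have h1 : C *ᵥ (γ1s - γ0) = ((1 - δ) / 2) • ![rα, rβ] := by
      funext i; fin_cases i <;>
        simp [hC, Matrix.mulVec, dotProduct, Fin.sum_univ_two] <;> linarith
    have h2 : γ1s - γ0 = ((1 - δ) / 2) • (C⁻¹ *ᵥ ![rα, rβ]) := by
      have h3 : C⁻¹ *ᵥ (C *ᵥ (γ1s - γ0)) = C⁻¹ *ᵥ (((1 - δ) / 2) • ![rα, rβ]) := by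
        rw [h1]
      rwa [Matrix.mulVec_mulVec, Matrix.nonsing_inv_mul C hC1inv, Matrix.one_mulVec,
        Matrix.mulVec_smul] at h3
    funext i
    have h4 := congrFun h2 i
    simp only [Pi.sub_apply, Pi.smul_apply, smul_eq_mul] at h4
    simp only [Pi.add_apply, Pi.smul_apply, smul_eq_mul]
    linarith
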